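/- Let K be a field, let q ∈ K be nonzero with q² + 1 ≠ 0, and let A be an associative unital K-algebra. Suppose a, b ∈ A satisfy a² = a, b² = b, aba = (q + q⁻¹)⁻² a, and bab = (q + q⁻¹)⁻² b. Set g_a = (1 + q⁻²)a − 1 and g_b = (1 + q⁻²)b − 1. Then g_a g_b g_a = g_b g_a g_b. Moreover, if instead a, b ∈ A are idempotents with ab = ba, then g_a g_b = g_b g_a. -/

import Mathlib

/-- Lemma 3.2(a), relations (B1) and (B2): if `a, b` satisfy the Temperley-Lieb
relations (H) and (T1), then `g_a = (1+q⁻²)a - 1` and `g_b = (1+q⁻²)b - 1`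
satisfy the braid relation; and if instead `a, b` are commuting idempotents,
then `g_a` and `g_b` commute. -/
theorem tl_braid_relations (K : Type*) [Field K] (A : Type*) [Ring A] [Algebra K A]
    (q : K) (hq : q ≠ 0) (hq2 : q ^ 2 + 1 ≠ 0) :
    (∀ a b : A, a * a = a → b * b = b →
      a * b * a = ((q + q⁻¹) ^ 2)⁻¹ • a →
      b * a * b = ((q + q⁻¹) ^ 2)⁻¹ • b →
      ((1 + q⁻¹ ^ 2) • a - 1) * ((1 + q⁻¹ ^ 2) • b - 1) * ((1 + q⁻¹ ^ 2) • a - 1)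
        = ((1 + q⁻¹ ^ 2) • b - 1) * ((1 + q⁻¹ ^ 2) • a - 1) * ((1 + q⁻¹ ^ 2) • b - 1)) ∧
    (∀ a b : A, a * a = a → b * b = b → a * b = b * a →
      ((1 + q⁻¹ ^ 2) • a - 1) * ((1 + q⁻¹ ^ 2) • b - 1)
        = ((1 + q⁻¹ ^ 2) • b - 1) * ((1 + q⁻¹ ^ 2) • a - 1)) := by
  constructor
  · intro a b ha hb haba hbab
    simp only [sub_mul, mul_sub, smul_mul_assoc, mul_smul_comm, smul_smul, mul_one, one_mul,
      mul_assoc] at *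
    rw [ha, hb, haba, hbab]
    rw [show ((q + q⁻¹) ^ 2)⁻¹ = q ^ 2 / (q ^ 2 + 1) ^ 2 by
        rw [show (q + q⁻¹) ^ 2 = (q ^ 2 + 1) ^ 2 / q ^ 2 by field_simp, inv_div],
      show (1 + q⁻¹ ^ 2) = (q ^ 2 + 1) / q ^ 2 by field_simp]
    match_scalars <;> field_simp <;> ring
  · intro a b ha hb hab
    simp only [sub_mul, mul_sub, smul_mul_assoc, mul_smul_comm, smul_smul, mul_one, one_mul]
    rw [hab]
    module
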